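/- Let A be an associative ℚ(q,z)-algebra with invertible elements H_{2k-1}, H_{2k}, H_{2k+1} satisfying the Hecke relations (Hᵢ - q)(Hᵢ + q⁻¹) = 0 and braid relations where applicable, and an element E with E·H_{2k-1} = H_{2k-1}·E = qE, E·H_{2k+1} = H_{2k+1}·E = qE, E·H_{2k}·E = z·((z-z⁻¹)/(q-q⁻¹))^{k-1}·E, E·H_{2k-1}H_{2k}⁻¹H_{2k-1}⁻¹·E = E·H_{2k}⁻¹·E, and H_{2k+1}·(E·H_{2k}·E)·H_{2k+1}⁻¹ = E·H_{2k}·E. Then E·H_{2k}⁻¹H_{2k+1}⁻¹H_{2k-1}H_{2k}·E = E·H_{2k}⁻¹H_{2k+1}H_{2k-1}⁻¹H_{2k}·E. -/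

import Mathlib

/-- The indeterminate `q` inside the field `ℚ(q,z)`, realized as `RatFunc (RatFunc ℚ)`
where the inner variable is `q` and the outer one is `z`. -/
noncomputable def qvar : RatFunc (RatFunc ℚ) := RatFunc.C RatFunc.X

/-- The indeterminate `z` inside the field `ℚ(q,z)`. -/
noncomputable def zvar : RatFunc (RatFunc ℚ) := RatFunc.X

lemma qvar_ne_zero : qvar ≠ 0 := by simp [qvar, RatFunc.X_ne_zero]

lemma hecke_inv {A : Type*} [Ring A] [Algebra (RatFunc (RatFunc ℚ)) A] (H : Aˣ)
    (hH : ((H : A) - algebraMap (RatFunc (RatFunc ℚ)) A qvar) *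
        ((H : A) + algebraMap (RatFunc (RatFunc ℚ)) A qvar⁻¹) = 0) :
    ((H⁻¹ : Aˣ) : A) = (H : A) - (qvar - qvar⁻¹) • (1 : A) := by
  set q : A := algebraMap (RatFunc (RatFunc ℚ)) A qvar with hq
  set qi : A := algebraMap (RatFunc (RatFunc ℚ)) A qvar⁻¹ with hqi
  have hqqi : q * qi = 1 := by
    rw [hq, hqi, ← map_mul, mul_inv_cancel₀ qvar_ne_zero, map_one]
  have hδ : (qvar - qvar⁻¹) • (1 : A) = q - qi := by
    rw [← Algebra.algebraMap_eq_smul_one, map_sub]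
  rw [hδ]
  have comm : (H : A) * q = q * (H : A) := (Algebra.commutes _ _).symm
  have h1 : (H : A) * ((H : A) - (q - qi)) = 1 := by
    calc (H : A) * ((H : A) - (q - qi))
        = ((H : A) - q) * ((H : A) + qi) + q * qi - (H : A) * q + q * (H : A) := by
          noncomm_ring
      _ = 0 + 1 - (H : A) * q + q * (H : A) := by rw [hH, hqqi]
      _ = 1 := by rw [comm]; noncomm_ring
  have h2 : ((H⁻¹ : Aˣ) : A) * ((H : A) * ((H : A) - (q - qi))) = ((H⁻¹ : Aˣ) : A) := by
    rw [h1, mul_one]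
  rw [← mul_assoc, Units.inv_mul, one_mul] at h2
  exact h2.symm

/-- Abstract version of equation (3.6): with `Ha = H_{2k-1}`, `Hb = H_{2k}`,
`Hc = H_{2k+1}` and `E = e_{(k)}` satisfying the listed identities of Lemma 2.6,
one has `E Hb⁻¹ Hc⁻¹ Ha Hb E = E Hb⁻¹ Hc Ha⁻¹ Hb E`. -/
theorem qBrauer_ek_bar_identity (A : Type*) [Ring A]
    [Algebra (RatFunc (RatFunc ℚ)) A] (k : ℕ) (hk : 1 ≤ k)
    (Ha Hb Hc : Aˣ) (E : A)
    (hqa : ((Ha : A) - algebraMap (RatFunc (RatFunc ℚ)) A qvar) *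
        ((Ha : A) + algebraMap (RatFunc (RatFunc ℚ)) A qvar⁻¹) = 0)
    (hqb : ((Hb : A) - algebraMap (RatFunc (RatFunc ℚ)) A qvar) *
        ((Hb : A) + algebraMap (RatFunc (RatFunc ℚ)) A qvar⁻¹) = 0)
    (hqc : ((Hc : A) - algebraMap (RatFunc (RatFunc ℚ)) A qvar) *
        ((Hc : A) + algebraMap (RatFunc (RatFunc ℚ)) A qvar⁻¹) = 0)
    (hbab : (Ha : A) * (Hb : A) * (Ha : A) = (Hb : A) * (Ha : A) * (Hb : A))
    (hbbc : (Hb : A) * (Hc : A) * (Hb : A) = (Hc : A) * (Hb : A) * (Hc : A))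
    (hac : (Ha : A) * (Hc : A) = (Hc : A) * (Ha : A))
    (hEa : E * (Ha : A) = algebraMap (RatFunc (RatFunc ℚ)) A qvar * E)
    (haE : (Ha : A) * E = algebraMap (RatFunc (RatFunc ℚ)) A qvar * E)
    (hEc : E * (Hc : A) = algebraMap (RatFunc (RatFunc ℚ)) A qvar * E)
    (hcE : (Hc : A) * E = algebraMap (RatFunc (RatFunc ℚ)) A qvar * E)
    (hEbE : E * (Hb : A) * E =
      algebraMap (RatFunc (RatFunc ℚ)) A
        (zvar * ((zvar - zvar⁻¹) / (qvar - qvar⁻¹)) ^ (k - 1)) * E)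
    (hconj : E * (Ha : A) * ((Hb⁻¹ : Aˣ) : A) * ((Ha⁻¹ : Aˣ) : A) * E =
      E * ((Hb⁻¹ : Aˣ) : A) * E)
    (hcomm : (Hc : A) * (E * (Hb : A) * E) * ((Hc⁻¹ : Aˣ) : A) =
      E * (Hb : A) * E) :
    E * ((Hb⁻¹ : Aˣ) : A) * ((Hc⁻¹ : Aˣ) : A) * (Ha : A) * (Hb : A) * E =
      E * ((Hb⁻¹ : Aˣ) : A) * (Hc : A) * ((Ha⁻¹ : Aˣ) : A) * (Hb : A) * E := by
  -- right-associated versions of the hypotheses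
  have hEa' : ∀ y : A, E * ((Ha : A) * y) = qvar • (E * y) := fun y => by
    rw [← mul_assoc, hEa, mul_assoc, ← Algebra.smul_def]
  have hEc' : ∀ y : A, E * ((Hc : A) * y) = qvar • (E * y) := fun y => by
    rw [← mul_assoc, hEc, mul_assoc, ← Algebra.smul_def]
  have haE' : (Ha : A) * E = qvar • E := by rw [haE, ← Algebra.smul_def]
  have hcE' : (Hc : A) * E = qvar • E := by rw [hcE, ← Algebra.smul_def]
  have hbab' : ∀ y : A, (Hb : A) * ((Ha : A) * ((Hb : A) * y))
      = (Ha : A) * ((Hb : A) * ((Ha : A) * y)) := fun y => by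
    have := congrArg (· * y) hbab.symm
    simpa only [mul_assoc] using this
  have hbbc' : ∀ y : A, (Hb : A) * ((Hc : A) * ((Hb : A) * y))
      = (Hc : A) * ((Hb : A) * ((Hc : A) * y)) := fun y => by
    have := congrArg (· * y) hbbc
    simpa only [mul_assoc] using this
  -- the key computation: E Hb⁻¹ X Hb E = E Hb E for X = Ha, Hc
  have main : ∀ X : A,
      (∀ y : A, (Hb : A) * (X * ((Hb : A) * y)) = X * ((Hb : A) * (X * y))) →
      (∀ y : A, E * (X * y) = qvar • (E * y)) → (X * E = qvar • E) →
      E * (((Hb⁻¹ : Aˣ) : A) * (X * ((Hb : A) * E))) = E * ((Hb : A) * E) := by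
    intro X hbr hEX hXE
    rw [hecke_inv Hb hqb]
    rw [sub_mul, mul_sub, smul_mul_assoc, one_mul]
    rw [hbr E, hXE]
    simp only [mul_smul_comm]
    rw [hEX]
    simp only [smul_smul]
    rw [← sub_smul]
    have : qvar * qvar - (qvar - qvar⁻¹) * qvar = 1 := by
      have h0 := qvar_ne_zero
      field_simp
      ring
    rw [this, one_smul]
  have mA : E * (((Hb⁻¹ : Aˣ) : A) * ((Ha : A) * ((Hb : A) * E))) = E * ((Hb : A) * E) :=
    main (Ha : A) hbab' hEa' haE'
  have mC : E * (((Hb⁻¹ : Aˣ) : A) * ((Hc : A) * ((Hb : A) * E))) = E * ((Hb : A) * E) :=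
    main (Hc : A) hbbc' hEc' hcE'
  simp only [mul_assoc]
  rw [hecke_inv Hc hqc, hecke_inv Ha hqa]
  simp only [sub_mul, mul_sub, smul_mul_assoc, one_mul, mul_smul_comm]
  rw [mA, mC]
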